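/- Let M be a right H-Hopf module over a Hopf algebra H with antipode S. Then the map P_R : M → M defined by P_R(m) = m_(0) · S(m_(1)) is a projection from M onto the subspace of right coinvariants M^R = {m ∈ M | ρ_R(m) = m ⊗ 1_H}, i.e., P_R(M) ⊆ M^R, P_R restricts to the identity on M^R, and P_R² = P_R. -/

import Mathlib

open TensorProduct LinearMap Coalgebra

/-- A right Hopf module over a Hopf algebra `H`: `act` is a right `H`-module structure,
`ρ` is a right `H`-comodule structure, and the compatibility `ρ (m · h) = ρ(m) Δ(h)` holds. -/
def IsRightHopfModule (K : Type*) [Field K] (H : Type*) [Ring H] [HopfAlgebra K H]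
    {M : Type*} [AddCommGroup M] [Module K M]
    (act : M ⊗[K] H →ₗ[K] M) (ρ : M →ₗ[K] M ⊗[K] H) : Prop :=
  -- right module axioms
  (∀ (m : M) (h h' : H), act (act (m ⊗ₜ[K] h) ⊗ₜ[K] h') = act (m ⊗ₜ[K] (h * h'))) ∧
  (∀ m : M, act (m ⊗ₜ[K] (1 : H)) = m) ∧
  -- right comodule axioms: coassociativity and counitality
  (rTensor H ρ ∘ₗ ρ =
    (TensorProduct.assoc K M H H).symm.toLinearMap ∘ₗ lTensor M (Coalgebra.comul (R := K)) ∘ₗ ρ) ∧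
  (∀ m : M, (TensorProduct.rid K M) ((lTensor M (Coalgebra.counit (R := K))) (ρ m)) = m) ∧
  -- Hopf module compatibility: ρ(m·h) = m₍₀₎·h₁ ⊗ m₍₁₎h₂
  (ρ ∘ₗ act =
    TensorProduct.map act (LinearMap.mul' K H) ∘ₗ
      (tensorTensorTensorComm K M H H H).toLinearMap ∘ₗ
        TensorProduct.map ρ (Coalgebra.comul (R := K)))

section ConvolutionAux

variable {K : Type*} [Field K] {H : Type*} [Ring H] [HopfAlgebra K H]

namespace HopfProjAux

lemma sum_counit_smul {x : H} {ι : Type*} (r : Coalgebra.Repr K x ι) :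
    ∑ i ∈ r.index, counit (R := K) (r.left i) • r.right i = x := by
  have := congrArg (TensorProduct.lid K H) (sum_counit_tmul_eq r)
  simp only [map_sum, lid_tmul, one_smul] at this
  simpa using this

lemma sum_smul_counit {x : H} {ι : Type*} (r : Coalgebra.Repr K x ι) :
    ∑ i ∈ r.index, counit (R := K) (r.right i) • r.left i = x := by
  have := congrArg (TensorProduct.rid K H) (sum_tmul_counit_eq r)
  simp only [map_sum, rid_tmul, one_smul] at this
  simpa using this

variable {A : Type*} [Semiring A] [Algebra K A]

/-- Convolution product on `Hom(H, A)`. -/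
noncomputable def conv (f g : H →ₗ[K] A) : H →ₗ[K] A :=
  mul' K A ∘ₗ TensorProduct.map f g ∘ₗ Coalgebra.comul

lemma conv_apply (f g : H →ₗ[K] A) (x : H) {ι : Type*} (r : Coalgebra.Repr K x ι) :
    conv f g x = ∑ i ∈ r.index, f (r.left i) * g (r.right i) := by
  simp only [conv, comp_apply, ← r.eq, map_sum, map_tmul, mul'_apply]

lemma conv_assoc (f g h : H →ₗ[K] A) : conv (conv f g) h = conv f (conv g h) := by
  ext x
  let r := Coalgebra.Repr.arbitrary K x
  let a₁ : (i : H × H) → Coalgebra.Repr K (r.left i) (H × H) := fun i => Coalgebra.Repr.arbitrary K _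
  let a₂ : (i : H × H) → Coalgebra.Repr K (r.right i) (H × H) := fun i => Coalgebra.Repr.arbitrary K _
  have key := congrArg (mul' K A ∘ₗ TensorProduct.map f (mul' K A ∘ₗ TensorProduct.map g h))
    (sum_tmul_tmul_eq r a₁ a₂)
  simp only [map_sum, comp_apply, map_tmul, mul'_apply] at key
  rw [conv_apply _ _ x r, conv_apply _ _ x r]
  calc ∑ i ∈ r.index, conv f g (r.left i) * h (r.right i)
      = ∑ i ∈ r.index, ∑ j ∈ (a₁ i).index,
          f ((a₁ i).left j) * (g ((a₁ i).right j) * h (r.right i)) := by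
        refine Finset.sum_congr rfl fun i _ => ?_
        rw [conv_apply f g _ (a₁ i), Finset.sum_mul]
        simp [mul_assoc]
    _ = ∑ i ∈ r.index, ∑ j ∈ (a₂ i).index,
          f (r.left i) * (g ((a₂ i).left j) * h ((a₂ i).right j)) := key
    _ = ∑ i ∈ r.index, f (r.left i) * conv g h (r.right i) := by
        refine Finset.sum_congr rfl fun i _ => ?_
        rw [conv_apply g h _ (a₂ i), Finset.mul_sum]

lemma conv_unit_left (f : H →ₗ[K] A) :
    conv ((Algebra.linearMap K A) ∘ₗ (counit : H →ₗ[K] K)) f = f := by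
  ext x
  let r := Coalgebra.Repr.arbitrary K x
  rw [conv_apply _ _ x r]
  calc ∑ i ∈ r.index, (Algebra.linearMap K A ∘ₗ counit) (r.left i) * f (r.right i)
      = ∑ i ∈ r.index, f (counit (R := K) (r.left i) • r.right i) := by
        refine Finset.sum_congr rfl fun i _ => ?_
        rw [map_smul, Algebra.smul_def]
        simp
    _ = f x := by rw [← map_sum, sum_counit_smul r]

lemma conv_unit_right (f : H →ₗ[K] A) :
    conv f ((Algebra.linearMap K A) ∘ₗ (counit : H →ₗ[K] K)) = f := by
  ext x
  let r := Coalgebra.Repr.arbitrary K x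
  rw [conv_apply _ _ x r]
  calc ∑ i ∈ r.index, f (r.left i) * (Algebra.linearMap K A ∘ₗ counit) (r.right i)
      = ∑ i ∈ r.index, f (counit (R := K) (r.right i) • r.left i) := by
        refine Finset.sum_congr rfl fun i _ => ?_
        rw [map_smul, Algebra.smul_def]
        simp only [comp_apply, Algebra.linearMap_apply]
        rw [Algebra.commutes]
    _ = f x := by rw [← map_sum, sum_smul_counit r]

/-- `h ↦ S h₂ ⊗ S h₁`. -/
noncomputable def aflip : H →ₗ[K] H ⊗[K] H :=
  (TensorProduct.comm K H H).toLinearMap ∘ₗ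
    TensorProduct.map (HopfAlgebra.antipode (R := K)) (HopfAlgebra.antipode (R := K)) ∘ₗ
      (comul : H →ₗ[K] H ⊗[K] H)

lemma aflip_apply {x : H} {ι : Type*} (r : Coalgebra.Repr K x ι) :
    aflip (K := K) x = ∑ i ∈ r.index,
      HopfAlgebra.antipode (R := K) (r.right i) ⊗ₜ[K] HopfAlgebra.antipode (R := K) (r.left i) := by
  simp only [aflip, comp_apply, LinearEquiv.coe_coe, ← r.eq, map_sum, map_tmul, comm_tmul]

lemma convL1 : conv (comul : H →ₗ[K] H ⊗[K] H)
    ((comul : H →ₗ[K] H ⊗[K] H) ∘ₗ HopfAlgebra.antipode (R := K))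
    = Algebra.linearMap K (H ⊗[K] H) ∘ₗ (counit : H →ₗ[K] K) := by
  ext x
  let r := Coalgebra.Repr.arbitrary K x
  rw [conv_apply _ _ x r]
  calc ∑ i ∈ r.index, comul (R := K) (r.left i) *
        ((comul : H →ₗ[K] H ⊗[K] H) ∘ₗ HopfAlgebra.antipode (R := K)) (r.right i)
      = ∑ i ∈ r.index,
          comul (R := K) (r.left i * HopfAlgebra.antipode (R := K) (r.right i)) := by
        refine Finset.sum_congr rfl fun i _ => ?_
        simp [Bialgebra.comul_mul]
    _ = comul (R := K) (∑ i ∈ r.index,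
          r.left i * HopfAlgebra.antipode (R := K) (r.right i)) := by rw [map_sum]
    _ = (Algebra.linearMap K (H ⊗[K] H) ∘ₗ (counit : H →ₗ[K] K)) x := by
        rw [HopfAlgebra.sum_mul_antipode_eq_algebraMap_counit r]
        simp

noncomputable def Phi1 : H ⊗[K] (H ⊗[K] H) →ₗ[K] H ⊗[K] H :=
  mul' K (H ⊗[K] H) ∘ₗ
    TensorProduct.map
      ((TensorProduct.comm K H H).toLinearMap ∘ₗ
        TensorProduct.map (HopfAlgebra.antipode (R := K)) (HopfAlgebra.antipode (R := K)))
      (comul : H →ₗ[K] H ⊗[K] H) ∘ₗ (TensorProduct.assoc K H H H).symm.toLinearMap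

lemma Phi1_apply (a b z : H) :
    Phi1 (K := K) (a ⊗ₜ[K] (b ⊗ₜ[K] z)) =
      (HopfAlgebra.antipode (R := K) b ⊗ₜ[K] HopfAlgebra.antipode (R := K) a) *
        comul (R := K) z := by
  simp [Phi1, assoc_symm_tmul, comm_tmul, mul'_apply]

noncomputable def Phi2 (x' : H) : H ⊗[K] (H ⊗[K] H) →ₗ[K] H ⊗[K] H :=
  TensorProduct.map (mul' K H ∘ₗ rTensor H (HopfAlgebra.antipode (R := K)))
      (mulLeft K (HopfAlgebra.antipode (R := K) x')) ∘ₗ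
    (TensorProduct.assoc K H H H).symm.toLinearMap

lemma Phi2_apply (x' p q w : H) :
    Phi2 (K := K) x' (p ⊗ₜ[K] (q ⊗ₜ[K] w)) =
      (HopfAlgebra.antipode (R := K) p * q) ⊗ₜ[K]
        (HopfAlgebra.antipode (R := K) x' * w) := by
  simp [Phi2, assoc_symm_tmul, mul'_apply]

lemma convL2 : conv (aflip (K := K)) (comul : H →ₗ[K] H ⊗[K] H)
    = Algebra.linearMap K (H ⊗[K] H) ∘ₗ (counit : H →ₗ[K] K) := by
  ext x
  let r := Coalgebra.Repr.arbitrary K x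
  let a₁ : (i : H × H) → Coalgebra.Repr K (r.left i) (H × H) := fun i => Coalgebra.Repr.arbitrary K _
  let a₂ : (i : H × H) → Coalgebra.Repr K (r.right i) (H × H) := fun i => Coalgebra.Repr.arbitrary K _
  rw [conv_apply _ _ x r]
  have key := congrArg (Phi1 (K := K)) (sum_tmul_tmul_eq r a₁ a₂)
  simp only [map_sum, Phi1_apply] at key
  calc ∑ i ∈ r.index, aflip (K := K) (r.left i) * comul (R := K) (r.right i)
      = ∑ i ∈ r.index, ∑ j ∈ (a₁ i).index,
          (HopfAlgebra.antipode (R := K) ((a₁ i).right j) ⊗ₜ[K]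
            HopfAlgebra.antipode (R := K) ((a₁ i).left j)) * comul (R := K) (r.right i) := by
        refine Finset.sum_congr rfl fun i _ => ?_
        rw [aflip_apply (a₁ i), Finset.sum_mul]
    _ = ∑ i ∈ r.index, ∑ k ∈ (a₂ i).index,
          (HopfAlgebra.antipode (R := K) ((a₂ i).left k) ⊗ₜ[K]
            HopfAlgebra.antipode (R := K) (r.left i)) * comul (R := K) ((a₂ i).right k) := key
    _ = ∑ i ∈ r.index, (1 : H) ⊗ₜ[K]
          (HopfAlgebra.antipode (R := K) (r.left i) * r.right i) := by
        refine Finset.sum_congr rfl fun i _ => ?_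
        let b₁ : (k : H × H) → Coalgebra.Repr K ((a₂ i).left k) (H × H) :=
          fun k => Coalgebra.Repr.arbitrary K _
        let b₂ : (k : H × H) → Coalgebra.Repr K ((a₂ i).right k) (H × H) :=
          fun k => Coalgebra.Repr.arbitrary K _
        have key2 := congrArg (Phi2 (K := K) (r.left i)) (sum_tmul_tmul_eq (a₂ i) b₁ b₂)
        simp only [map_sum, Phi2_apply] at key2
        calc ∑ k ∈ (a₂ i).index,
              (HopfAlgebra.antipode (R := K) ((a₂ i).left k) ⊗ₜ[K]
                HopfAlgebra.antipode (R := K) (r.left i)) * comul (R := K) ((a₂ i).right k)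
            = ∑ k ∈ (a₂ i).index, ∑ l ∈ (b₂ k).index,
                (HopfAlgebra.antipode (R := K) ((a₂ i).left k) * (b₂ k).left l) ⊗ₜ[K]
                  (HopfAlgebra.antipode (R := K) (r.left i) * (b₂ k).right l) := by
              refine Finset.sum_congr rfl fun k _ => ?_
              rw [← (b₂ k).eq, Finset.mul_sum]
              refine Finset.sum_congr rfl fun l _ => ?_
              rw [Algebra.TensorProduct.tmul_mul_tmul]
          _ = ∑ k ∈ (a₂ i).index, ∑ j ∈ (b₁ k).index,
                (HopfAlgebra.antipode (R := K) ((b₁ k).left j) * (b₁ k).right j) ⊗ₜ[K]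
                  (HopfAlgebra.antipode (R := K) (r.left i) * (a₂ i).right k) := key2.symm
          _ = ∑ k ∈ (a₂ i).index,
                (algebraMap K H (counit (R := K) ((a₂ i).left k))) ⊗ₜ[K]
                  (HopfAlgebra.antipode (R := K) (r.left i) * (a₂ i).right k) := by
              refine Finset.sum_congr rfl fun k _ => ?_
              rw [← sum_tmul, HopfAlgebra.sum_antipode_mul_eq_algebraMap_counit (b₁ k)]
          _ = (1 : H) ⊗ₜ[K] (HopfAlgebra.antipode (R := K) (r.left i) * r.right i) := by
              calc ∑ k ∈ (a₂ i).index,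
                    (algebraMap K H (counit (R := K) ((a₂ i).left k))) ⊗ₜ[K]
                      (HopfAlgebra.antipode (R := K) (r.left i) * (a₂ i).right k)
                  = ∑ k ∈ (a₂ i).index, (1 : H) ⊗ₜ[K]
                      (HopfAlgebra.antipode (R := K) (r.left i) *
                        (counit (R := K) ((a₂ i).left k) • (a₂ i).right k)) := by
                    refine Finset.sum_congr rfl fun k _ => ?_
                    rw [Algebra.algebraMap_eq_smul_one, smul_tmul, mul_smul_comm]
                _ = (1 : H) ⊗ₜ[K] (HopfAlgebra.antipode (R := K) (r.left i) *
                      ∑ k ∈ (a₂ i).index,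
                        counit (R := K) ((a₂ i).left k) • (a₂ i).right k) := by
                    rw [← tmul_sum, ← Finset.mul_sum]
                _ = (1 : H) ⊗ₜ[K] (HopfAlgebra.antipode (R := K) (r.left i) * r.right i) := by
                    rw [sum_counit_smul (a₂ i)]
    _ = (Algebra.linearMap K (H ⊗[K] H) ∘ₗ (counit : H →ₗ[K] K)) x := by
        rw [← tmul_sum, HopfAlgebra.sum_antipode_mul_eq_algebraMap_counit r]
        simp only [comp_apply, Algebra.linearMap_apply, Algebra.TensorProduct.algebraMap_apply]
        rw [Algebra.algebraMap_eq_smul_one, smul_tmul]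

/-- The antipode is anti-comultiplicative: `Δ ∘ S = (S ⊗ S) ∘ swap ∘ Δ`. -/
lemma comul_comp_antipode :
    (comul : H →ₗ[K] H ⊗[K] H) ∘ₗ HopfAlgebra.antipode (R := K) = aflip (K := K) := by
  calc (comul : H →ₗ[K] H ⊗[K] H) ∘ₗ HopfAlgebra.antipode (R := K)
      = conv (Algebra.linearMap K (H ⊗[K] H) ∘ₗ (counit : H →ₗ[K] K))
          ((comul : H →ₗ[K] H ⊗[K] H) ∘ₗ HopfAlgebra.antipode (R := K)) :=
        (conv_unit_left _).symm
    _ = conv (conv (aflip (K := K)) (comul : H →ₗ[K] H ⊗[K] H))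
          ((comul : H →ₗ[K] H ⊗[K] H) ∘ₗ HopfAlgebra.antipode (R := K)) := by rw [convL2]
    _ = conv (aflip (K := K)) (conv (comul : H →ₗ[K] H ⊗[K] H)
          ((comul : H →ₗ[K] H ⊗[K] H) ∘ₗ HopfAlgebra.antipode (R := K))) := conv_assoc _ _ _
    _ = conv (aflip (K := K))
          (Algebra.linearMap K (H ⊗[K] H) ∘ₗ (counit : H →ₗ[K] K)) := by rw [convL1]
    _ = aflip (K := K) := conv_unit_right _

lemma comul_antipode_apply {x : H} {ι : Type*} (r : Coalgebra.Repr K x ι) :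
    comul (R := K) (HopfAlgebra.antipode (R := K) x) = ∑ i ∈ r.index,
      HopfAlgebra.antipode (R := K) (r.right i) ⊗ₜ[K]
        HopfAlgebra.antipode (R := K) (r.left i) := by
  have := LinearMap.congr_fun (comul_comp_antipode (K := K) (H := H)) x
  simp only [comp_apply] at this
  rw [this, aflip_apply r]

lemma antipode_one : HopfAlgebra.antipode (R := K) (1 : H) = 1 := by
  have := HopfAlgebra.mul_antipode_lTensor_comul_apply (R := K) (A := H) (1 : H)
  simpa [Bialgebra.comul_one, Algebra.TensorProduct.one_def, mul'_apply] using this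

end HopfProjAux

end ConvolutionAux

section MainAux

variable {K : Type*} [Field K] {H : Type*} [Ring H] [HopfAlgebra K H]
variable {M : Type*} [AddCommGroup M] [Module K M]

namespace HopfProjAux

noncomputable def Omega (act : M ⊗[K] H →ₗ[K] M) :
    (M ⊗[K] H) ⊗[K] H →ₗ[K] M ⊗[K] H :=
  TensorProduct.map act (mul' K H) ∘ₗ
    (tensorTensorTensorComm K M H H H).toLinearMap ∘ₗ
      lTensor (M ⊗[K] H) (aflip (K := K))

lemma Omega_apply (act : M ⊗[K] H →ₗ[K] M) (t : M ⊗[K] H) (w : H) :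
    Omega act (t ⊗ₜ[K] w) =
      TensorProduct.map act (mul' K H)
        ((tensorTensorTensorComm K M H H H) (t ⊗ₜ[K] aflip (K := K) w)) := by
  simp [Omega]

noncomputable def Lambda (act : M ⊗[K] H →ₗ[K] M) (n : M) :
    H ⊗[K] (H ⊗[K] H) →ₗ[K] M ⊗[K] H :=
  (TensorProduct.comm K H M).toLinearMap ∘ₗ
    TensorProduct.map (mul' K H ∘ₗ lTensor H (HopfAlgebra.antipode (R := K)))
      (act ∘ₗ TensorProduct.mk K M H n ∘ₗ HopfAlgebra.antipode (R := K)) ∘ₗ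
        (TensorProduct.assoc K H H H).symm.toLinearMap

lemma Lambda_apply (act : M ⊗[K] H →ₗ[K] M) (n : M) (q w₁ w₂ : H) :
    Lambda act n (q ⊗ₜ[K] (w₁ ⊗ₜ[K] w₂)) =
      act (n ⊗ₜ[K] HopfAlgebra.antipode (R := K) w₂) ⊗ₜ[K]
        (q * HopfAlgebra.antipode (R := K) w₁) := by
  simp [Lambda, assoc_symm_tmul, mul'_apply, comm_tmul]

lemma Omega_assoc_symm_comul (act : M ⊗[K] H →ₗ[K] M) (n : M) (v : H) :
    Omega act ((TensorProduct.assoc K M H H).symm (n ⊗ₜ[K] comul (R := K) v)) =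
      act (n ⊗ₜ[K] HopfAlgebra.antipode (R := K) v) ⊗ₜ[K] (1 : H) := by
  let r := Coalgebra.Repr.arbitrary K v
  let ra : (j : H × H) → Coalgebra.Repr K (r.left j) (H × H) := fun j => Coalgebra.Repr.arbitrary K _
  let rb : (j : H × H) → Coalgebra.Repr K (r.right j) (H × H) := fun j => Coalgebra.Repr.arbitrary K _
  have key := congrArg (Lambda act n) (sum_tmul_tmul_eq r ra rb)
  simp only [map_sum, Lambda_apply] at key
  calc Omega act ((TensorProduct.assoc K M H H).symm (n ⊗ₜ[K] comul (R := K) v))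
      = ∑ j ∈ r.index, Omega act ((n ⊗ₜ[K] r.left j) ⊗ₜ[K] r.right j) := by
        rw [← r.eq]
        simp only [tmul_sum, map_sum]
        refine Finset.sum_congr rfl fun j _ => ?_
        rw [assoc_symm_tmul]
    _ = ∑ j ∈ r.index, ∑ l ∈ (rb j).index,
          act (n ⊗ₜ[K] HopfAlgebra.antipode (R := K) ((rb j).right l)) ⊗ₜ[K]
            (r.left j * HopfAlgebra.antipode (R := K) ((rb j).left l)) := by
        refine Finset.sum_congr rfl fun j _ => ?_
        rw [Omega_apply, aflip_apply (rb j)]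
        simp only [tmul_sum, map_sum, tensorTensorTensorComm_tmul, map_tmul, mul'_apply]
    _ = ∑ j ∈ r.index, ∑ l ∈ (rb j).index,
          Lambda act n (r.left j ⊗ₜ[K] ((rb j).left l ⊗ₜ[K] (rb j).right l)) := by
        simp only [Lambda_apply]
    _ = ∑ j ∈ r.index, ∑ j' ∈ (ra j).index,
          Lambda act n ((ra j).left j' ⊗ₜ[K] ((ra j).right j' ⊗ₜ[K] r.right j)) := key.symm
    _ = ∑ j ∈ r.index,
          act (n ⊗ₜ[K] HopfAlgebra.antipode (R := K) (r.right j)) ⊗ₜ[K]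
            algebraMap K H (counit (R := K) (r.left j)) := by
        refine Finset.sum_congr rfl fun j _ => ?_
        simp only [Lambda_apply]
        rw [← tmul_sum, HopfAlgebra.sum_mul_antipode_eq_algebraMap_counit (ra j)]
    _ = act (n ⊗ₜ[K] HopfAlgebra.antipode (R := K) v) ⊗ₜ[K] (1 : H) := by
        calc ∑ j ∈ r.index,
              act (n ⊗ₜ[K] HopfAlgebra.antipode (R := K) (r.right j)) ⊗ₜ[K]
                algebraMap K H (counit (R := K) (r.left j))
            = ∑ j ∈ r.index,
                act (n ⊗ₜ[K] HopfAlgebra.antipode (R := K)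
                  (counit (R := K) (r.left j) • r.right j)) ⊗ₜ[K] (1 : H) := by
              refine Finset.sum_congr rfl fun j _ => ?_
              rw [Algebra.algebraMap_eq_smul_one, ← smul_tmul, ← map_smul, ← tmul_smul, ← map_smul]
          _ = act (n ⊗ₜ[K] HopfAlgebra.antipode (R := K)
                (∑ j ∈ r.index, counit (R := K) (r.left j) • r.right j)) ⊗ₜ[K] (1 : H) := by
              rw [← sum_tmul, ← map_sum, ← tmul_sum, ← map_sum]
          _ = act (n ⊗ₜ[K] HopfAlgebra.antipode (R := K) v) ⊗ₜ[K] (1 : H) := by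
              rw [sum_counit_smul r]

end HopfProjAux

end MainAux

theorem rightHopfModule_projection
    (K : Type*) [Field K] (H : Type*) [Ring H] [HopfAlgebra K H]
    (M : Type*) [AddCommGroup M] [Module K M]
    (act : M ⊗[K] H →ₗ[K] M) (ρ : M →ₗ[K] M ⊗[K] H)
    (hM : IsRightHopfModule K H act ρ)
    -- P_R(m) = m₍₀₎ · S(m₍₁₎)
    (P : M →ₗ[K] M)
    (hP : P = act ∘ₗ lTensor M (HopfAlgebra.antipode (R := K)) ∘ₗ ρ) :
    (∀ m : M, ρ (P m) = (P m) ⊗ₜ[K] (1 : H)) ∧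
    (∀ m : M, ρ m = m ⊗ₜ[K] (1 : H) → P m = m) ∧
    P ∘ₗ P = P := by
  obtain ⟨hmul, hone, hco, hcu, hcp⟩ := hM
  have part1 : ∀ m : M, ρ (P m) = (P m) ⊗ₜ[K] (1 : H) := by
    intro m
    obtain ⟨sf, hs⟩ := TensorProduct.exists_finset (ρ m)
    have hPmeq : P m = ∑ p ∈ sf, act (p.1 ⊗ₜ[K] HopfAlgebra.antipode (R := K) p.2) := by
      rw [hP]
      simp only [comp_apply]
      rw [hs]
      simp only [map_sum, lTensor_tmul]
    have hcpe : ∀ (u : M) (v : H), ρ (act (u ⊗ₜ[K] v)) =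
        TensorProduct.map act (mul' K H)
          ((tensorTensorTensorComm K M H H H) (ρ u ⊗ₜ[K] Coalgebra.comul (R := K) v)) := by
      intro u v
      have := LinearMap.congr_fun hcp (u ⊗ₜ[K] v)
      simpa only [comp_apply, map_tmul, LinearEquiv.coe_coe] using this
    calc ρ (P m)
        = ∑ p ∈ sf, ρ (act (p.1 ⊗ₜ[K] HopfAlgebra.antipode (R := K) p.2)) := by
          rw [hPmeq, map_sum]
      _ = ∑ p ∈ sf, HopfProjAux.Omega act (ρ p.1 ⊗ₜ[K] p.2) := by
          refine Finset.sum_congr rfl fun p _ => ?_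
          rw [hcpe, HopfProjAux.Omega_apply]
          have : Coalgebra.comul (R := K) (HopfAlgebra.antipode (R := K) p.2)
              = HopfProjAux.aflip (K := K) p.2 :=
            LinearMap.congr_fun (HopfProjAux.comul_comp_antipode (K := K) (H := H)) p.2
          rw [this]
      _ = HopfProjAux.Omega act (rTensor H ρ (ρ m)) := by
          rw [hs, map_sum, map_sum]
          refine (Finset.sum_congr rfl fun p _ => ?_).symm
          rw [rTensor_tmul]
      _ = HopfProjAux.Omega act
            ((TensorProduct.assoc K M H H).symm
              (lTensor M (Coalgebra.comul (R := K)) (ρ m))) := by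
          have := LinearMap.congr_fun hco m
          simp only [comp_apply, LinearEquiv.coe_coe] at this
          rw [this]
      _ = ∑ p ∈ sf, HopfProjAux.Omega act
            ((TensorProduct.assoc K M H H).symm
              (p.1 ⊗ₜ[K] Coalgebra.comul (R := K) p.2)) := by
          rw [hs]
          simp only [map_sum, lTensor_tmul, LinearEquiv.coe_coe]
      _ = ∑ p ∈ sf, act (p.1 ⊗ₜ[K] HopfAlgebra.antipode (R := K) p.2) ⊗ₜ[K] (1 : H) := by
          refine Finset.sum_congr rfl fun p _ => ?_
          exact HopfProjAux.Omega_assoc_symm_comul act p.1 p.2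
      _ = (P m) ⊗ₜ[K] (1 : H) := by rw [← sum_tmul, ← hPmeq]
  have part2 : ∀ m : M, ρ m = m ⊗ₜ[K] (1 : H) → P m = m := by
    intro m hm
    rw [hP]
    simp only [comp_apply, hm, lTensor_tmul, HopfProjAux.antipode_one]
    exact hone m
  refine ⟨part1, part2, ?_⟩
  ext m
  simp only [comp_apply]
  exact part2 (P m) (part1 m)
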